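/- In the braid group B_3, the word σ_2^{-1} σ_1 σ_2 σ_2^k (for any k ≥ 0) is geodesic: no word of length less than k + 3 in σ_1^{±1}, σ_2^{±1} represents the element σ_2^{-1} σ_1 σ_2^{k+1}. -/

import Mathlib

/-- The braid relations on `m` generators `σ_0, …, σ_{m-1}` (0-based indexing). -/
def braidRels (m : ℕ) : Set (FreeGroup (Fin m)) :=
  {r | (∃ i j : Fin m, (i : ℕ) + 1 = (j : ℕ) ∧
          r = FreeGroup.of i * FreeGroup.of j * FreeGroup.of i *
              (FreeGroup.of j * FreeGroup.of i * FreeGroup.of j)⁻¹) ∨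
       (∃ i j : Fin m, (i : ℕ) + 2 ≤ (j : ℕ) ∧
          r = FreeGroup.of i * FreeGroup.of j * (FreeGroup.of i * FreeGroup.of j)⁻¹)}

/-- The braid group `B_n`, with Artin generators indexed (0-based) by `Fin (n-1)`. -/
abbrev BraidGroup (n : ℕ) := PresentedGroup (braidRels (n - 1))

/-- The Artin generator `σ_{i+1}` in 1-based notation, i.e. the `i`-th generator 0-based;
returns `1` for out-of-range indices. -/
def braidGen (n i : ℕ) : BraidGroup n :=
  if h : i < n - 1 then PresentedGroup.of ⟨i, h⟩ else 1

/-- Evaluation of a word: a letter `(i, true)` is `σ_i` (0-based) and `(i, false)` is `σ_i⁻¹`. -/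
def evalWord (n : ℕ) (w : List (ℕ × Bool)) : BraidGroup n :=
  (w.map fun p => if p.2 then braidGen n p.1 else (braidGen n p.1)⁻¹).prod

/-- `k`-fold concatenation (power) of a word. -/
def wpow (u : List (ℕ × Bool)) (k : ℕ) : List (ℕ × Bool) :=
  (List.replicate k u).flatten

/-- The semicircular word `σ_i^ε σ_{i±1}^ε ⋯ σ_j^ε` (0-based indices, `true` = positive sign). -/
def semiWord (i j : ℕ) (ε : Bool) : List (ℕ × Bool) :=
  if i ≤ j then (List.range (j - i + 1)).map fun t => (i + t, ε)
  else (List.range (i - j + 1)).map fun t => (i - t, ε)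

/-- The semicircular move as an element of the braid group. -/
def semiMove (n i j : ℕ) (ε : Bool) : BraidGroup n := evalWord n (semiWord i j ε)

/-- Letter `σ_1` of `B_3` (0-based index 0). -/
def A : ℕ × Bool := (0, true)
/-- Letter `σ_1⁻¹`. -/
def A' : ℕ × Bool := (0, false)
/-- Letter `σ_2`. -/
def B : ℕ × Bool := (1, true)
/-- Letter `σ_2⁻¹`. -/
def B' : ℕ × Bool := (1, false)

/-- A word in the letters `σ_1^{±1}, σ_2^{±1}` of `B_3`. -/
def ValidWord3 (w : List (ℕ × Bool)) : Prop := ∀ l ∈ w, l.1 < 2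

/-- A word is geodesic if no strictly shorter word in the generators `σ_1^{±1}, σ_2^{±1}`
represents the same element of `B_3`. -/
def Geodesic3 (w : List (ℕ × Bool)) : Prop :=
  ∀ w', ValidWord3 w' → evalWord 3 w' = evalWord 3 w → w.length ≤ w'.length


namespace Stmt19Aux

open Matrix

abbrev M2 := Matrix (Fin 2) (Fin 2) ℚ

def Xm : M2 := !![3, 1; 0, 1]
def XmI : M2 := !![1/3, -1/3; 0, 1]
def Ym : M2 := !![1, 0; -3, 3]
def YmI : M2 := !![1, 0; 1, 1/3]

lemma Xm_mul_XmI : Xm * XmI = 1 := by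
  ext i j
  fin_cases i <;> fin_cases j <;>
    simp [Xm, XmI, Matrix.mul_apply, Fin.sum_univ_two, Matrix.one_apply] <;> norm_num

lemma XmI_mul_Xm : XmI * Xm = 1 := by
  ext i j
  fin_cases i <;> fin_cases j <;>
    simp [Xm, XmI, Matrix.mul_apply, Fin.sum_univ_two, Matrix.one_apply] <;> norm_num

lemma Ym_mul_YmI : Ym * YmI = 1 := by
  ext i j
  fin_cases i <;> fin_cases j <;>
    simp [Ym, YmI, Matrix.mul_apply, Fin.sum_univ_two, Matrix.one_apply] <;> norm_num

lemma YmI_mul_Ym : YmI * Ym = 1 := by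
  ext i j
  fin_cases i <;> fin_cases j <;>
    simp [Ym, YmI, Matrix.mul_apply, Fin.sum_univ_two, Matrix.one_apply] <;> norm_num

def XU : M2ˣ := ⟨Xm, XmI, Xm_mul_XmI, XmI_mul_Xm⟩
def YU : M2ˣ := ⟨Ym, YmI, Ym_mul_YmI, YmI_mul_Ym⟩

lemma braid_matrix : XU * YU * XU = YU * XU * YU := by
  apply Units.ext
  show Xm * Ym * Xm = Ym * Xm * Ym
  ext i j
  fin_cases i <;> fin_cases j <;>
    simp [Xm, Ym, Matrix.mul_apply, Fin.sum_univ_two] <;> norm_num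

def fρ : Fin 2 → M2ˣ
  | ⟨0, _⟩ => XU
  | ⟨_ + 1, _⟩ => YU

lemma fρ_zero : fρ 0 = XU := rfl
lemma fρ_one : fρ 1 = YU := rfl

lemma rels_hold : ∀ r ∈ braidRels 2, FreeGroup.lift fρ r = 1 := by
  rintro r (⟨i, j, hij, rfl⟩ | ⟨i, j, hij, rfl⟩)
  · have hi := i.isLt
    have hj := j.isLt
    have hi0 : i = 0 := by omega
    have hj1 : j = 1 := by omega
    subst hi0; subst hj1
    simp only [_root_.map_mul, _root_.map_inv, FreeGroup.lift_apply_of, fρ_zero, fρ_one]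
    rw [mul_inv_eq_one]
    exact braid_matrix
  · exact absurd hij (by have := j.isLt; omega)

def ρ : BraidGroup 3 →* M2ˣ := PresentedGroup.toGroup rels_hold

def fε : Fin 2 → Multiplicative ℤ := fun _ => Multiplicative.ofAdd 1

lemma εrels_hold : ∀ r ∈ braidRels 2, FreeGroup.lift fε r = 1 := by
  rintro r (⟨i, j, _, rfl⟩ | ⟨i, j, _, rfl⟩) <;>
    simp only [_root_.map_mul, _root_.map_inv, FreeGroup.lift_apply_of, fε] <;>
    rw [mul_inv_eq_one]

def ε : BraidGroup 3 →* Multiplicative ℤ := PresentedGroup.toGroup εrels_hold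

lemma braidGen_zero : braidGen 3 0 = PresentedGroup.of (0 : Fin 2) := by
  simp [braidGen]

lemma braidGen_one : braidGen 3 1 = PresentedGroup.of (1 : Fin 2) := by
  simp [braidGen]

lemma ρ_gen0 : ρ (braidGen 3 0) = XU := by
  rw [braidGen_zero]; exact PresentedGroup.toGroup.of rels_hold

lemma ρ_gen1 : ρ (braidGen 3 1) = YU := by
  rw [braidGen_one]; exact PresentedGroup.toGroup.of rels_hold

lemma ε_gen0 : ε (braidGen 3 0) = Multiplicative.ofAdd 1 := by
  rw [braidGen_zero]; exact PresentedGroup.toGroup.of εrels_hold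

lemma ε_gen1 : ε (braidGen 3 1) = Multiplicative.ofAdd 1 := by
  rw [braidGen_one]; exact PresentedGroup.toGroup.of εrels_hold

lemma evalWord_nil : evalWord 3 [] = 1 := rfl

lemma evalWord_cons (l : ℕ × Bool) (w : List (ℕ × Bool)) :
    evalWord 3 (l :: w) =
      (if l.2 then braidGen 3 l.1 else (braidGen 3 l.1)⁻¹) * evalWord 3 w := by
  simp [evalWord]

lemma ε_letter {i : ℕ} (h : i < 2) : ε (braidGen 3 i) = Multiplicative.ofAdd 1 := by
  interval_cases i
  · exact ε_gen0
  · exact ε_gen1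

lemma count_lemma : ∀ w : List (ℕ × Bool), ValidWord3 w →
    ∃ p n : ℕ, w.length = p + n ∧
      Multiplicative.toAdd (ε (evalWord 3 w)) = (p : ℤ) - n ∧
      (n = 0 → ∀ l ∈ w, l.2 = true) := by
  intro w
  induction w with
  | nil =>
    intro _
    exact ⟨0, 0, rfl, by simp [evalWord_nil], by simp⟩
  | cons l w ih =>
    intro hv
    have hl : l.1 < 2 := hv l List.mem_cons_self
    have hw : ValidWord3 w := fun x hx => hv x (List.mem_cons_of_mem l hx)
    obtain ⟨p, n, hlen, hsum, hpos⟩ := ih hw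
    cases hb : l.2
    · refine ⟨p, n + 1, by simp [hlen]; omega, ?_, by omega⟩
      rw [evalWord_cons, hb]
      simp only [Bool.false_eq_true, if_false]
      rw [_root_.map_mul, _root_.map_inv, ε_letter hl, toAdd_mul, toAdd_inv, toAdd_ofAdd, hsum]
      push_cast; ring
    · refine ⟨p + 1, n, by simp [hlen]; omega, ?_, ?_⟩
      · rw [evalWord_cons, hb, if_pos rfl]
        rw [_root_.map_mul, ε_letter hl, toAdd_mul, toAdd_ofAdd, hsum]
        push_cast; ring
      · intro hn x hx
        rcases List.mem_cons.mp hx with h | h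
        · rw [h, hb]
        · exact hpos hn x h

lemma pos_matrix : ∀ w : List (ℕ × Bool), (∀ l ∈ w, l.1 < 2) → (∀ l ∈ w, l.2 = true) →
    ∃ L : List M2, (∀ M ∈ L, M = Xm ∨ M = Ym) ∧ (ρ (evalWord 3 w)).val = L.prod := by
  intro w
  induction w with
  | nil => exact fun _ _ => ⟨[], by simp, by simp [evalWord_nil]⟩
  | cons l w ih =>
    intro h1 h2
    have hl : l.1 < 2 := h1 l List.mem_cons_self
    have hb : l.2 = true := h2 l List.mem_cons_self
    obtain ⟨L, hL, hprod⟩ := ih (fun x hx => h1 x (List.mem_cons_of_mem l hx))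
      (fun x hx => h2 x (List.mem_cons_of_mem l hx))
    have hgen : ∃ Z : M2, (Z = Xm ∨ Z = Ym) ∧ (ρ (braidGen 3 l.1)).val = Z := by
      interval_cases h : l.1
      · exact ⟨Xm, Or.inl rfl, by rw [ρ_gen0]; rfl⟩
      · exact ⟨Ym, Or.inr rfl, by rw [ρ_gen1]; rfl⟩
    obtain ⟨Z, hZ, hZval⟩ := hgen
    refine ⟨Z :: L, ?_, ?_⟩
    · intro M hM
      rcases List.mem_cons.mp hM with h | h
      · rw [h]; exact hZ
      · exact hL M h
    · rw [evalWord_cons, hb, if_pos rfl, _root_.map_mul, Units.val_mul, hZval, hprod,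
        List.prod_cons]

/-- `G j = Y⁻¹ X Y^(j+1)` as an explicit matrix sequence. -/
def Gm : ℕ → M2
  | 0 => !![0, 3; -1, 4]
  | j + 1 => Gm j * Ym

def ZInt (P : M2) : Prop := ∀ i j, ∃ m : ℤ, P i j = (m : ℚ)

lemma ZInt_one : ZInt 1 := by
  intro i j
  by_cases h : i = j
  · exact ⟨1, by simp [h, Matrix.one_apply]⟩
  · exact ⟨0, by simp [Matrix.one_apply_ne h]⟩

lemma ZInt_Xm : ZInt Xm := by
  intro i j
  fin_cases i <;> fin_cases j
  · exact ⟨3, by simp [Xm]⟩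
  · exact ⟨1, by simp [Xm]⟩
  · exact ⟨0, by simp [Xm]⟩
  · exact ⟨1, by simp [Xm]⟩

lemma ZInt_Ym : ZInt Ym := by
  intro i j
  fin_cases i <;> fin_cases j
  · exact ⟨1, by simp [Ym]⟩
  · exact ⟨0, by simp [Ym]⟩
  · exact ⟨-3, by simp [Ym]⟩
  · exact ⟨3, by simp [Ym]⟩

lemma ZInt_mul {A B : M2} (hA : ZInt A) (hB : ZInt B) : ZInt (A * B) := by
  intro i j
  obtain ⟨a0, ha0⟩ := hA i 0
  obtain ⟨a1, ha1⟩ := hA i 1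
  obtain ⟨b0, hb0⟩ := hB 0 j
  obtain ⟨b1, hb1⟩ := hB 1 j
  refine ⟨a0 * b0 + a1 * b1, ?_⟩
  rw [Matrix.mul_apply, Fin.sum_univ_two, ha0, ha1, hb0, hb1]
  push_cast; ring

lemma ZInt_prod : ∀ L : List M2, (∀ M ∈ L, M = Xm ∨ M = Ym) → ZInt L.prod := by
  intro L
  induction L with
  | nil => exact fun _ => by simpa using ZInt_one
  | cons Z L ih =>
    intro h
    rw [List.prod_cons]
    have hZ : ZInt Z := by
      rcases h Z List.mem_cons_self with h' | h' <;> rw [h']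
      · exact ZInt_Xm
      · exact ZInt_Ym
    exact ZInt_mul hZ (ih fun M hM => h M (List.mem_cons_of_mem Z hM))

lemma Gm_struct : ∀ j : ℕ,
    (∃ b : ℤ, Gm j 0 1 = (b : ℚ) ∧ 0 < b) ∧
    (∃ t : ℤ, Gm j 1 0 = ((3 * t + 2 : ℤ) : ℚ)) ∧
    (∃ s : ℤ, Gm j 1 1 = (s : ℚ)) := by
  intro j
  induction j with
  | zero =>
    refine ⟨⟨3, by norm_num [Gm], by norm_num⟩, ⟨-1, by norm_num [Gm]⟩, ⟨4, by norm_num [Gm]⟩⟩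
  | succ j ih =>
    obtain ⟨⟨b, hb, hbpos⟩, ⟨t, ht⟩, ⟨s, hs⟩⟩ := ih
    have h01 : Gm (j + 1) 0 1 = Gm j 0 1 * 3 := by
      show (Gm j * Ym) 0 1 = _
      rw [Matrix.mul_apply, Fin.sum_univ_two]
      simp [Ym]
    have h10 : Gm (j + 1) 1 0 = Gm j 1 0 + Gm j 1 1 * (-3) := by
      show (Gm j * Ym) 1 0 = _
      rw [Matrix.mul_apply, Fin.sum_univ_two]
      simp [Ym]
    have h11 : Gm (j + 1) 1 1 = Gm j 1 1 * 3 := by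
      show (Gm j * Ym) 1 1 = _
      rw [Matrix.mul_apply, Fin.sum_univ_two]
      simp [Ym]
    refine ⟨⟨3 * b, ?_, by omega⟩, ⟨t - s, ?_⟩, ⟨3 * s, ?_⟩⟩
    · rw [h01, hb]; push_cast; ring
    · rw [h10, ht, hs]; push_cast; ring
    · rw [h11, hs]; push_cast; ring

lemma key : ∀ L : List M2, (∀ M ∈ L, M = Xm ∨ M = Ym) → ∀ j : ℕ, L.prod ≠ Gm j := by
  intro L
  induction L using List.reverseRecOn with
  | nil =>
    intro _ j h
    obtain ⟨⟨b, hb, hbpos⟩, _, _⟩ := Gm_struct j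
    rw [List.prod_nil] at h
    have : (1 : M2) 0 1 = (b : ℚ) := by rw [h, hb]
    rw [Matrix.one_apply_ne (by decide)] at this
    have : b = 0 := by exact_mod_cast this.symm
    omega
  | append_singleton L Z ih =>
    intro hmem j h
    have hL : ∀ M ∈ L, M = Xm ∨ M = Ym := fun M hM =>
      hmem M (List.mem_append_left _ hM)
    have hLZ : L.prod * Z = Gm j := by
      rw [List.prod_append, List.prod_singleton] at h
      exact h
    have hP : ZInt L.prod := ZInt_prod L hL
    rcases hmem Z (List.mem_append_right _ (List.mem_singleton_self Z)) with hZ | hZ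
    · -- last letter X: entry (1,0) of Gm j would be divisible by 3
      subst hZ
      obtain ⟨_, ⟨t, ht⟩, _⟩ := Gm_struct j
      have h10 : (L.prod * Xm) 1 0 = L.prod 1 0 * 3 := by
        rw [Matrix.mul_apply, Fin.sum_univ_two]
        simp [Xm]
      obtain ⟨m, hm⟩ := hP 1 0
      have : L.prod 1 0 * 3 = ((3 * t + 2 : ℤ) : ℚ) := by
        rw [← h10, hLZ, ht]
      rw [hm] at this
      have hmt : (m * 3 : ℤ) = 3 * t + 2 := by exact_mod_cast this
      omega
    · -- last letter Y
      subst hZ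
      cases j with
      | zero =>
        have h11 : (L.prod * Ym) 1 1 = L.prod 1 1 * 3 := by
          rw [Matrix.mul_apply, Fin.sum_univ_two]
          simp [Ym]
        obtain ⟨m, hm⟩ := hP 1 1
        have h4 : L.prod 1 1 * 3 = (4 : ℚ) := by
          rw [← h11, hLZ]; norm_num [Gm]
        rw [hm] at h4
        have hm4 : (m * 3 : ℤ) = 4 := by exact_mod_cast h4
        omega
      | succ j' =>
        have hGm : Gm (j' + 1) = Gm j' * Ym := rfl
        have : L.prod = Gm j' := by
          have := congrArg (fun A => A * YmI) (hLZ.trans hGm)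
          simpa [mul_assoc, Ym_mul_YmI] using this
        exact ih hL j' this

lemma ρ_g : ∀ k : ℕ,
    (ρ ((braidGen 3 1)⁻¹ * braidGen 3 0 * (braidGen 3 1) ^ (k + 1))).val = Gm k := by
  intro k
  induction k with
  | zero =>
    rw [_root_.map_mul, _root_.map_mul, _root_.map_inv, _root_.map_pow, ρ_gen0, ρ_gen1, pow_one]
    show YmI * Xm * Ym = Gm 0
    ext i j
    fin_cases i <;> fin_cases j <;>
      simp [Xm, Ym, YmI, Gm, Matrix.mul_apply, Fin.sum_univ_two] <;> norm_num
  | succ k ih =>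
    have : (braidGen 3 1)⁻¹ * braidGen 3 0 * (braidGen 3 1) ^ (k + 1 + 1) =
        ((braidGen 3 1)⁻¹ * braidGen 3 0 * (braidGen 3 1) ^ (k + 1)) * braidGen 3 1 := by
      rw [pow_succ]; ring_nf
      group
    rw [this, _root_.map_mul, Units.val_mul, ih, ρ_gen1]
    rfl

lemma main_aux (k : ℕ) (w : List (ℕ × Bool)) (hw : ValidWord3 w)
    (he : evalWord 3 w = (braidGen 3 1)⁻¹ * braidGen 3 0 * (braidGen 3 1) ^ (k + 1)) :
    k + 3 ≤ w.length := by
  by_contra hlt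
  push_neg at hlt
  obtain ⟨p, n, hlen, hsum, hpos⟩ := count_lemma w hw
  have hε1 : ε (evalWord 3 w) = Multiplicative.ofAdd ((k : ℤ) + 1) := by
    rw [he, _root_.map_mul, _root_.map_mul, _root_.map_inv, _root_.map_pow, ε_gen0, ε_gen1]
    rw [inv_mul_cancel, one_mul]
    rw [← ofAdd_nsmul]
    congr 1
    push_cast
    ring
  have hε : Multiplicative.toAdd (ε (evalWord 3 w)) = (k : ℤ) + 1 := by
    rw [hε1, toAdd_ofAdd]
  have hpn : (p : ℤ) - n = (k : ℤ) + 1 := by rw [← hsum, hε]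
  have hn : n = 0 := by omega
  have hall := hpos hn
  obtain ⟨L, hL, hprod⟩ := pos_matrix w hw hall
  have : L.prod = Gm k := by rw [← hprod, he, ρ_g]
  exact key L hL k this

lemma wpow_single (k : ℕ) : wpow [B] k = List.replicate k B := by
  induction k with
  | zero => rfl
  | succ k ih =>
    rw [wpow, List.replicate_succ, List.flatten_cons]
    rw [wpow] at ih
    rw [ih]
    rfl

lemma eval_target (k : ℕ) : evalWord 3 ([B', A, B] ++ wpow [B] k) =
    (braidGen 3 1)⁻¹ * braidGen 3 0 * (braidGen 3 1) ^ (k + 1) := by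
  rw [wpow_single]
  rw [evalWord, List.map_append, List.prod_append]
  have h1 : ([B', A, B].map fun p => if p.2 then braidGen 3 p.1 else (braidGen 3 p.1)⁻¹).prod =
      (braidGen 3 1)⁻¹ * (braidGen 3 0 * braidGen 3 1) := by
    simp [A, B, B', mul_assoc]
  have h2 : ((List.replicate k B).map fun p => if p.2 then braidGen 3 p.1 else (braidGen 3 p.1)⁻¹).prod =
      (braidGen 3 1) ^ k := by
    rw [List.map_replicate, List.prod_replicate]
    simp [B]
  rw [h1, h2, pow_succ]
  group

end Stmt19Aux

theorem stmt19 (k : ℕ) :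
    Geodesic3 ([B', A, B] ++ wpow [B] k) ∧
    ∀ w : List (ℕ × Bool), ValidWord3 w →
      evalWord 3 w = (braidGen 3 1)⁻¹ * braidGen 3 0 * (braidGen 3 1) ^ (k + 1) →
      k + 3 ≤ w.length := by
  constructor
  · intro w' hv heq
    have hlen : ([B', A, B] ++ wpow [B] k).length = k + 3 := by
      rw [Stmt19Aux.wpow_single]
      simp

    rw [hlen]
    exact Stmt19Aux.main_aux k w' hv (heq.trans (Stmt19Aux.eval_target k))
  · exact Stmt19Aux.main_aux k
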